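/- Let K be a compact linearly ordered topological space (with the order topology) and let a, b ∈ K with a < b. Then there exists a continuous increasing (order-preserving) function f : K → [0,1] such that f(a) = 0 and f(b) = 1. -/

import Mathlib

open Set

theorem exists_increasing_continuous_sep
    {K : Type*} [TopologicalSpace K] [LinearOrder K] [OrderTopology K] [CompactSpace K]
    (a b : K) (hab : a < b) :
    ∃ f : K → unitInterval, Continuous f ∧ Monotone f ∧ f a = 0 ∧ f b = 1 := by
  obtain ⟨g, hg0, hg1, hg01⟩ := exists_continuous_zero_one_of_isClosed
    (isClosed_Iic (a := a)) (isClosed_Ici (a := b))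
    (Iic_disjoint_Ici.mpr (not_le.mpr hab))
  set F : K → ℝ := fun x => sSup (g '' Iic x) with hF
  have hIic : ∀ x : K, IsCompact (Iic x) := fun x => (isClosed_Iic).isCompact
  have hbdd : ∀ x : K, BddAbove (g '' Iic x) := fun x =>
    ⟨1, fun r ⟨y, _, hy⟩ => hy ▸ (hg01 y).2⟩
  have hne : ∀ x : K, (g '' Iic x).Nonempty := fun x => ⟨g x, x, self_mem_Iic, rfl⟩
  -- sup attained
  have hmax : ∀ x : K, ∃ y ∈ Iic x, F x = g y ∧ ∀ z ∈ Iic x, g z ≤ g y := fun x =>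
    (hIic x).exists_sSup_image_eq_and_ge ⟨x, self_mem_Iic⟩ g.continuous.continuousOn
  have hmono : Monotone F := fun x y hxy =>
    csSup_le_csSup (hbdd y) (hne x) (image_mono (Iic_subset_Iic.mpr hxy))
  have hFa : F a = 0 := by
    have h : g '' Iic a = {0} := by
      apply Subset.antisymm
      · rintro r ⟨z, hz, rfl⟩; exact hg0 hz
      · rintro r (rfl : r = 0); exact ⟨a, self_mem_Iic, hg0 self_mem_Iic⟩
    rw [hF]; simp [h]
  have hFb : F b = 1 := by
    refine le_antisymm (csSup_le (hne b) ?_) ?_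
    · rintro r ⟨z, _, rfl⟩; exact (hg01 z).2
    · have := le_csSup (hbdd b) ⟨b, self_mem_Iic, rfl⟩
      rwa [hg1 (self_mem_Ici)] at this
  have hcont : Continuous F := by
    rw [continuous_iff_lower_upperSemicontinuous]
    constructor
    · rw [lowerSemicontinuous_iff_isOpen_preimage]
      intro r
      have heq : F ⁻¹' Ioi r = (⋃ y ∈ {y : K | r < g y}, Ioi y) ∪ {y : K | r < g y} := by
        ext x
        simp only [mem_preimage, mem_Ioi, mem_union, mem_iUnion, mem_setOf_eq, exists_prop]
        constructor
        · intro hx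
          obtain ⟨w, hw, hxw⟩ := (lt_csSup_iff (hbdd x) (hne x)).mp hx
          obtain ⟨z, hz, rfl⟩ := hw
          rcases lt_or_eq_of_le (hz : z ≤ x) with h | rfl
          · exact Or.inl ⟨z, hxw, h⟩
          · exact Or.inr hxw
        · rintro (⟨y, hy, hyx⟩ | hx)
          · exact lt_of_lt_of_le hy (le_csSup (hbdd x) ⟨y, hyx.le, rfl⟩)
          · exact lt_of_lt_of_le hx (le_csSup (hbdd x) ⟨x, self_mem_Iic, rfl⟩)
      rw [heq]
      exact ((isOpen_biUnion fun y _ => isOpen_Ioi)).union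
        (isOpen_lt continuous_const g.continuous)
    · rw [upperSemicontinuous_iff_isOpen_preimage]
      intro r
      refine isOpen_iff_forall_mem_open.mpr fun x hx => ?_
      set C : Set K := g ⁻¹' Ici r with hC
      have hCclosed : IsClosed C := isClosed_Ici.preimage g.continuous
      have hCsub : C ⊆ Ioi x := by
        intro z hz
        by_contra h
        have hzx : z ≤ x := not_lt.mp (by simpa using h)
        have h1 : g z ≤ F x := le_csSup (hbdd x) ⟨z, hzx, rfl⟩
        have h2 : r ≤ g z := hz
        exact absurd (h2.trans h1) (not_le.mpr hx.out)
      rcases eq_empty_or_nonempty C with hCe | hCne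
      · refine ⟨univ, fun z _ => ?_, isOpen_univ, mem_univ x⟩
        obtain ⟨y, hy, hFy, _⟩ := hmax z
        have hyC : y ∉ C := by rw [hCe]; exact notMem_empty y
        simp only [hC, mem_preimage, mem_Ici, not_le] at hyC
        simpa [mem_preimage, mem_Iio, hFy] using hyC
      · obtain ⟨m, hmC, hmin⟩ := (hCclosed.isCompact).exists_isLeast hCne
        refine ⟨Iio m, fun z hz => ?_, isOpen_Iio, hCsub hmC⟩
        obtain ⟨y, hy, hFy, _⟩ := hmax z
        have hyC : y ∉ C := fun h => absurd (hmin h) (not_le.mpr (lt_of_le_of_lt hy hz))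
        simp only [hC, mem_preimage, mem_Ici, not_le] at hyC
        simpa [mem_preimage, mem_Iio, hFy] using hyC
  refine ⟨fun x => projIcc 0 1 zero_le_one (F x), ?_, ?_, ?_, ?_⟩
  · exact continuous_projIcc.comp hcont
  · exact fun x y h => monotone_projIcc _ (hmono h)
  · show projIcc 0 1 zero_le_one (F a) = 0
    rw [hFa]; ext; simp [projIcc]
  · show projIcc 0 1 zero_le_one (F b) = 1
    rw [hFb]; ext; simp [projIcc]
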